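/- Let k be a field of characteristic p > 0 and consider on k[u₀, u₁, …, u_{n−2}] (n ≥ 3) the derivation ∂ = u₀·∂/∂u₀ + Σ_{i=1}^{n−2} (uᵢ − uᵢ²)·∂/∂uᵢ. Then ∂^[p] = ∂. -/

import Mathlib

open MvPolynomial

namespace Statement16Aux

open Finset

/-! ### Iterated Leibniz rule and Jacobson's lemma (`D^[p]` is a derivation in char `p`). -/

section Jacobson

variable {k A : Type*} [CommRing k] [CommRing A] [Algebra k A]

theorem derivation_iterate_leibniz (D : Derivation k A A) (n : ℕ) (a b : A) :
    D^[n] (a * b) =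
      ∑ j ∈ range (n + 1), n.choose j • (D^[n - j] a * D^[j] b) := by
  induction n with
  | zero => simp
  | succ n IH =>
    calc
      D^[n + 1] (a * b) =
          D (∑ j ∈ range (n + 1), n.choose j • (D^[n - j] a * D^[j] b)) := by
        rw [Function.iterate_succ_apply', IH]
      _ = (∑ j ∈ range (n + 1), n.choose j • (D^[n - j + 1] a * D^[j] b)) +
          ∑ j ∈ range (n + 1), n.choose j • (D^[n - j] a * D^[j + 1] b) := by
        rw [map_sum, ← sum_add_distrib]
        refine sum_congr rfl fun j _ => ?_
        rw [map_nsmul, Derivation.leibniz, smul_eq_mul, smul_eq_mul,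
          Function.iterate_succ_apply', Function.iterate_succ_apply', smul_add]
        ring_nf
      _ = (∑ j ∈ range (n + 1), n.choose (j + 1) • (D^[n - j] a * D^[j + 1] b)) +
            1 • (D^[n + 1] a * D^[0] b) +
          ∑ j ∈ range (n + 1), n.choose j • (D^[n - j] a * D^[j + 1] b) := ?_
      _ = ((∑ j ∈ range (n + 1), n.choose j • (D^[n - j] a * D^[j + 1] b)) +
            ∑ j ∈ range (n + 1), n.choose (j + 1) • (D^[n - j] a * D^[j + 1] b)) +
            1 • (D^[n + 1] a * D^[0] b) := by
        rw [add_comm, add_assoc]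
      _ = (∑ j ∈ range (n + 1),
            (n + 1).choose (j + 1) • (D^[n + 1 - (j + 1)] a * D^[j + 1] b)) +
            1 • (D^[n + 1] a * D^[0] b) := by
        simp_rw [Nat.choose_succ_succ, Nat.succ_sub_succ, add_smul, sum_add_distrib]
      _ = ∑ j ∈ range (n + 2),
            (n + 1).choose j • (D^[n + 1 - j] a * D^[j] b) := by
        rw [sum_range_succ' _ (n + 1), Nat.choose_zero_right, tsub_zero, one_smul]
    congr 1
    refine (sum_range_succ' _ _).trans (congrArg₂ (· + ·) ?_ ?_)
    · rw [sum_range_succ, Nat.choose_succ_self, zero_smul, add_zero]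
      refine sum_congr rfl fun j hj => ?_
      rw [mem_range] at hj
      rw [show n - (j + 1) + 1 = n - j from by omega]
    · rw [Nat.choose_zero_right, tsub_zero]

/-- In characteristic `p`, the `p`-th iterate of a derivation is a derivation. -/
noncomputable def iterateP (p : ℕ) [Fact p.Prime] [CharP A p]
    (D : Derivation k A A) : Derivation k A A where
  toLinearMap := (D : A →ₗ[k] A) ^ p
  map_one_eq_zero' := by
    obtain ⟨q, rfl⟩ := Nat.exists_eq_succ_of_ne_zero (Fact.out : p.Prime).ne_zero
    have h1 : ((D : A →ₗ[k] A) ^ (q + 1)) (1 : A) = (⇑D)^[q + 1] (1 : A) := by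
      rw [Module.End.pow_apply]; rfl
    show ((D : A →ₗ[k] A) ^ (q + 1)) (1 : A) = 0
    rw [h1, Function.iterate_succ_apply, D.map_one_eq_zero,
      Function.iterate_fixed D.map_zero]
  leibniz' := fun a b => by
    have hp : Fact p.Prime := inferInstance
    simp only [Module.End.pow_apply, Derivation.coeFn_coe]
    rw [derivation_iterate_leibniz D p a b, sum_range_succ,
      Finset.sum_eq_single_of_mem 0 (by simp [Nat.pos_of_ne_zero hp.out.ne_zero])]
    · simp only [Nat.choose_zero_right, one_smul, Nat.choose_self, tsub_zero, Nat.sub_self,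
        Function.iterate_zero_apply, smul_eq_mul]
      ring
    · intro j hj hj0
      rw [mem_range] at hj
      have hdvd : (p : ℕ) ∣ p.choose j := Nat.Prime.dvd_choose_self hp.out hj0 hj
      have : (p.choose j : A) = 0 := (CharP.cast_eq_zero_iff A p _).2 hdvd
      rw [nsmul_eq_mul, this, zero_mul]

theorem iterateP_apply (p : ℕ) [Fact p.Prime] [CharP A p]
    (D : Derivation k A A) (a : A) : iterateP p D a = D^[p] a := by
  change ((D : A →ₗ[k] A) ^ p) a = _
  rw [Module.End.pow_apply]
  rfl

end Jacobson

/-! ### Fermat's little theorem for casts. -/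

theorem cast_pow_char {k : Type*} [Field k] (p : ℕ) [Fact p.Prime] [CharP k p] (n : ℕ) :
    (n : k) ^ p = (n : k) := by
  have h := ZMod.pow_card (n : ZMod p)
  have := congrArg (ZMod.castHom (dvd_refl p) k) h
  rwa [map_pow, map_natCast] at this

/-! ### The power series side: `E = X d/dX` on `k⟦X⟧`. -/

section PowerSeriesSide

variable {k : Type*} [Field k]

open PowerSeries

set_option synthInstance.maxHeartbeats 1000000 in
/-- The derivation `X·d/dX` on `k⟦X⟧`. -/
noncomputable def E (k : Type*) [Field k] : Derivation k k⟦X⟧ k⟦X⟧ :=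
  (PowerSeries.X : k⟦X⟧) • PowerSeries.derivative k

theorem E_apply (f : k⟦X⟧) : E k f = PowerSeries.X * (PowerSeries.derivative k f) := by
  rw [E, Derivation.smul_apply, smul_eq_mul]

theorem coeff_E (n : ℕ) (f : k⟦X⟧) : coeff n (E k f) = (n : k) * coeff n f := by
  rw [E_apply]
  cases n with
  | zero => simp [coeff_zero_X_mul]
  | succ n =>
    rw [coeff_succ_X_mul, PowerSeries.coeff_derivative]
    push_cast
    ring

theorem coeff_E_iterate (r n : ℕ) (f : k⟦X⟧) :
    coeff n ((E k)^[r] f) = (n : k) ^ r * coeff n f := by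
  induction r generalizing f with
  | zero => simp
  | succ r IH =>
    rw [Function.iterate_succ_apply', coeff_E, IH, pow_succ]
    ring

theorem E_iterate_char (p : ℕ) [Fact p.Prime] [CharP k p] (f : k⟦X⟧) :
    (E k)^[p] f = E k f := by
  ext n
  rw [coeff_E_iterate, coeff_E, cast_pow_char]

/-- The series `T = X/(1+X)`, satisfying `E T = T - T²`. -/
noncomputable def T (k : Type*) [Field k] : k⟦X⟧ :=
  PowerSeries.X * (1 + PowerSeries.X)⁻¹

theorem constantCoeff_T : PowerSeries.constantCoeff (T k) = 0 := by
  rw [T, map_mul, PowerSeries.constantCoeff_X, zero_mul]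

theorem coeff_one_T : PowerSeries.coeff 1 (T k) = 1 := by
  have h : PowerSeries.coeff (0 + 1) (T k)
      = PowerSeries.coeff 0 ((1 + PowerSeries.X : k⟦X⟧)⁻¹) := by
    rw [T, PowerSeries.coeff_succ_X_mul]
  rw [show (1 : ℕ) = 0 + 1 from rfl, h, PowerSeries.coeff_zero_eq_constantCoeff,
    PowerSeries.constantCoeff_inv]
  simp

theorem T_ne_zero : T k ≠ 0 := fun h => by
  have h1 := coeff_one_T (k := k)
  rw [h, map_zero] at h1
  exact one_ne_zero h1.symm

theorem E_T : E k (T k) = T k - T k ^ 2 := by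
  have hU : PowerSeries.derivative k ((1 + PowerSeries.X : k⟦X⟧)⁻¹) =
      -((1 + PowerSeries.X : k⟦X⟧)⁻¹) ^ 2 := by
    rw [PowerSeries.derivative_inv']
    simp
  have hT : PowerSeries.derivative k (T k) =
      (1 + PowerSeries.X : k⟦X⟧)⁻¹ +
        PowerSeries.X * (-((1 + PowerSeries.X : k⟦X⟧)⁻¹) ^ 2) := by
    rw [T, Derivation.leibniz, hU]
    simp only [smul_eq_mul, PowerSeries.derivative_X]
    ring
  rw [E_apply, hT, T]
  ring

end PowerSeriesSide

/-! ### The univariate polynomial side: `d = (X - X²) d/dX` on `k[X]`. -/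

section UnivariateSide

variable {k : Type*} [Field k]

open Polynomial PowerSeries

set_option synthInstance.maxHeartbeats 1000000 in
/-- The derivation `(X - X²)·d/dX` on `k[X]`. -/
noncomputable def d (k : Type*) [Field k] : Derivation k k[X] k[X] :=
  ((Polynomial.X : k[X]) - Polynomial.X ^ 2) • Polynomial.derivative'

theorem d_apply (q : k[X]) :
    d k q = (Polynomial.X - Polynomial.X ^ 2) * Polynomial.derivative q := by
  rw [d, Derivation.smul_apply, smul_eq_mul]; rfl

theorem d_X : d k Polynomial.X = Polynomial.X - Polynomial.X ^ 2 := by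
  rw [d_apply, Polynomial.derivative_X, mul_one]

/-- The embedding `k[X] → k⟦X⟧`, `X ↦ T`. -/
noncomputable def ψ (k : Type*) [Field k] : k[X] →ₐ[k] k⟦X⟧ :=
  Polynomial.aeval (T k)

theorem ψ_comm (q : k[X]) : ψ k (d k q) = E k (ψ k q) := by
  have hmul : ∀ q r : k[X], ψ k (d k q) = E k (ψ k q) → ψ k (d k r) = E k (ψ k r) →
      ψ k (d k (q * r)) = E k (ψ k (q * r)) := by
    intro q r hq hr
    rw [Derivation.leibniz, smul_eq_mul, smul_eq_mul, map_add, map_mul, map_mul, hq, hr,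
      map_mul, Derivation.leibniz, smul_eq_mul, smul_eq_mul]
    try ring
  induction q using Polynomial.induction_on with
  | C a =>
    have h1 : d k (Polynomial.C a : k[X]) = 0 := by
      rw [d_apply, Polynomial.derivative_C, mul_zero]
    rw [h1, map_zero, show ((Polynomial.C a : k[X])) = algebraMap k k[X] a from rfl,
      AlgHom.commutes, Derivation.map_algebraMap]
  | add q r hq hr => rw [map_add, map_add, map_add, hq, hr, map_add]
  | monomial n a hn =>
    have hX : ψ k (d k Polynomial.X) = E k (ψ k Polynomial.X) := by
      rw [d_X, map_sub, map_pow, ψ, Polynomial.aeval_X, ← E_T]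
    rw [show Polynomial.C a * Polynomial.X ^ (n + 1) =
      (Polynomial.C a * Polynomial.X ^ n) * Polynomial.X by ring]
    exact hmul _ _ hn hX

theorem ψ_comm_iterate (r : ℕ) (q : k[X]) : ψ k ((d k)^[r] q) = (E k)^[r] (ψ k q) := by
  induction r generalizing q with
  | zero => rfl
  | succ r IH => rw [Function.iterate_succ_apply', Function.iterate_succ_apply', ψ_comm, IH]

theorem ψ_injective : Function.Injective (ψ k) := by
  have halg : ∀ c : k, ψ k (Polynomial.C c) = PowerSeries.C c := by
    intro c
    rw [ψ, Polynomial.aeval_C, PowerSeries.algebraMap_apply]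
    simp
  have key : ∀ (N : ℕ) (q : k[X]), q.natDegree ≤ N → ψ k q = 0 → q = 0 := by
    intro N
    induction N with
    | zero =>
      intro q hdeg hq
      rw [Polynomial.eq_C_of_natDegree_le_zero hdeg] at hq ⊢
      rw [halg] at hq
      have h0 : q.coeff 0 = 0 := by
        have := congrArg (PowerSeries.constantCoeff) hq
        rwa [PowerSeries.constantCoeff_C, map_zero] at this
      rw [h0, map_zero]
    | succ N IH =>
      intro q hdeg hq
      have hsplit : Polynomial.C (q.coeff 0) + Polynomial.X * q.divX = q := by
        rw [add_comm, Polynomial.X_mul_divX_add]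
      have hψ : PowerSeries.C (q.coeff 0) + T k * ψ k q.divX = 0 := by
        have hX : ψ k (Polynomial.X : k[X]) = T k := by rw [ψ, Polynomial.aeval_X]
        rw [← halg, ← hX, ← map_mul, ← map_add, hsplit, hq]
      have hc0 : q.coeff 0 = 0 := by
        have := congrArg (PowerSeries.constantCoeff) hψ
        rwa [map_add, map_mul, constantCoeff_T, zero_mul, add_zero,
          PowerSeries.constantCoeff_C, map_zero] at this
      have hdiv : ψ k q.divX = 0 := by
        rw [hc0, map_zero, zero_add] at hψ
        rcases mul_eq_zero.1 hψ with h | h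
        · exact absurd h T_ne_zero
        · exact h
      have hq0 : q.divX = 0 := IH q.divX (by
        have := Polynomial.natDegree_divX_eq_natDegree_tsub_one (p := q)
        omega) hdiv
      rw [← hsplit, hc0, hq0, map_zero, mul_zero, add_zero]
  intro a b hab
  have h := key (a - b).natDegree _ le_rfl (by rw [map_sub, hab, sub_self])
  exact sub_eq_zero.1 h

theorem d_iterate_char (p : ℕ) [Fact p.Prime] [CharP k p] :
    (d k)^[p] Polynomial.X = d k Polynomial.X := by
  apply ψ_injective
  rw [ψ_comm_iterate, ψ_comm, E_iterate_char]

end UnivariateSide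

/-! ### The multivariate side. -/

section Multivariate

variable {k : Type*} [Field k]

set_option synthInstance.maxHeartbeats 1000000 in
/-- The derivation `u₀ ∂₀ + Σ_{i≥1} (uᵢ - uᵢ²) ∂ᵢ`. -/
noncomputable def D (k : Type*) [Field k] (m : ℕ) :
    Derivation k (MvPolynomial (Fin (m + 2)) k) (MvPolynomial (Fin (m + 2)) k) :=
  ∑ i : Fin (m + 2), ((if i = 0 then X i else X i - X i ^ 2 : MvPolynomial (Fin (m + 2)) k) •
    (pderiv i : Derivation k (MvPolynomial (Fin (m + 2)) k) (MvPolynomial (Fin (m + 2)) k)))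

theorem derivation_sum_apply {A M : Type*} [CommSemiring A] [Algebra k A]
    [AddCommMonoid M] [Module k M] [Module A M] {ι : Type*} (s : Finset ι)
    (Ds : ι → Derivation k A M) (a : A) :
    (∑ i ∈ s, Ds i) a = ∑ i ∈ s, Ds i a := by
  induction s using Finset.cons_induction with
  | empty => rfl
  | cons i s hi IH => rw [Finset.sum_cons, Finset.sum_cons, Derivation.add_apply, IH]

theorem D_apply (m : ℕ) (f : MvPolynomial (Fin (m + 2)) k) :
    D k m f = ∑ i, (if i = 0 then X i else X i - X i ^ 2) * pderiv i f := by
  rw [D, derivation_sum_apply]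
  refine Finset.sum_congr rfl fun i _ => ?_
  rw [Derivation.smul_apply, smul_eq_mul]

theorem D_X (m : ℕ) (j : Fin (m + 2)) :
    D k m (X j) = (if j = 0 then X j else X j - X j ^ 2) := by
  classical
  rw [D_apply, Finset.sum_eq_single j]
  · rw [pderiv_X_self, mul_one]
  · intro i _ hij
    rw [pderiv_X_of_ne (Ne.symm hij), mul_zero]
  · intro h
    exact absurd (Finset.mem_univ j) h

/-- The embedding `k[X] → k[u₀,…]` sending `X` to `uᵢ`. -/
noncomputable def φ (m : ℕ) (i : Fin (m + 2)) :
    Polynomial k →ₐ[k] MvPolynomial (Fin (m + 2)) k :=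
  Polynomial.aeval (X i)

theorem φ_comm (m : ℕ) (i : Fin (m + 2)) (hi : i ≠ 0) (q : Polynomial k) :
    D k m (φ m i q) = φ m i (d k q) := by
  have hmul : ∀ q r : Polynomial k,
      D k m (φ m i q) = φ m i (d k q) → D k m (φ m i r) = φ m i (d k r) →
      D k m (φ m i (q * r)) = φ m i (d k (q * r)) := by
    intro q r hq hr
    rw [map_mul, Derivation.leibniz, smul_eq_mul, smul_eq_mul, hq, hr,
      Derivation.leibniz, smul_eq_mul, smul_eq_mul, map_add, map_mul, map_mul]
    try ring
  induction q using Polynomial.induction_on with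
  | C a =>
    have h1 : d k (Polynomial.C a : Polynomial k) = 0 := by
      rw [d_apply, Polynomial.derivative_C, mul_zero]
    rw [h1, map_zero, show ((Polynomial.C a : Polynomial k)) = algebraMap k (Polynomial k) a
      from rfl, AlgHom.commutes, Derivation.map_algebraMap]
  | add q r hq hr => rw [map_add, map_add, map_add, hq, hr, map_add]
  | monomial n a hn =>
    have hX : D k m (φ m i Polynomial.X) = φ m i (d k Polynomial.X) := by
      have h1 : φ m i (Polynomial.X : Polynomial k) = X i := by rw [φ, Polynomial.aeval_X]
      have h2 : D k m (X i) = X i - X i ^ 2 := by rw [D_X, if_neg hi]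
      rw [h1, h2, d_X, map_sub, map_pow, h1]
    rw [show Polynomial.C a * Polynomial.X ^ (n + 1) =
      (Polynomial.C a * Polynomial.X ^ n) * Polynomial.X by ring]
    exact hmul _ _ hn hX

theorem φ_comm_iterate (m : ℕ) (i : Fin (m + 2)) (hi : i ≠ 0) (r : ℕ) (q : Polynomial k) :
    (⇑(D k m))^[r] (φ m i q) = φ m i ((d k)^[r] q) := by
  induction r generalizing q with
  | zero => rfl
  | succ r IH =>
    rw [Function.iterate_succ_apply', Function.iterate_succ_apply', IH, φ_comm m i hi]

theorem D_iterate_X_zero (m : ℕ) (r : ℕ) :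
    (⇑(D k m))^[r] (X 0 : MvPolynomial (Fin (m + 2)) k) = X 0 := by
  induction r with
  | zero => rfl
  | succ r IH =>
    rw [Function.iterate_succ_apply', IH, D_X, if_pos rfl]

theorem D_iterate_char (p m : ℕ) [Fact p.Prime] [CharP k p] (i : Fin (m + 2)) :
    (⇑(D k m))^[p] (X i) = D k m (X i) := by
  by_cases hi : i = 0
  · subst hi
    rw [D_iterate_X_zero, D_X, if_pos rfl]
  · have hXi : (X i : MvPolynomial (Fin (m + 2)) k) = φ m i Polynomial.X := by
      rw [φ, Polynomial.aeval_X]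
    rw [hXi, φ_comm_iterate m i hi, d_iterate_char p, ← φ_comm m i hi]

theorem D_char (p m : ℕ) [Fact p.Prime] [CharP k p] :
    (⇑(D k m))^[p] = ⇑(D k m) := by
  haveI : CharP (MvPolynomial (Fin (m + 2)) k) p :=
    charP_of_injective_algebraMap' k (A := MvPolynomial (Fin (m + 2)) k) p
  have hD : iterateP p (D k m) = D k m :=
    derivation_ext fun i => by rw [iterateP_apply]; exact D_iterate_char p m i
  funext f
  rw [← iterateP_apply p (D k m) f, hD]

end Multivariate

end Statement16Aux


/-- Let `k` be a field of characteristic `p > 0` and consider on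
`k[u₀, u₁, …, u_{n−2}]` with `n ≥ 3` (here `m + 2` variables, `m : ℕ` arbitrary) the
derivation `∂ = u₀ ∂/∂u₀ + Σ_{i≥1} (uᵢ − uᵢ²) ∂/∂uᵢ`.  Then `∂^[p] = ∂`. -/
theorem statement16 {k : Type*} [Field k] (p m : ℕ) [Fact p.Prime] [CharP k p]
    (f : MvPolynomial (Fin (m + 2)) k) :
    (fun g : MvPolynomial (Fin (m + 2)) k =>
        ∑ i, (if i = 0 then X i else X i - X i ^ 2) * pderiv i g)^[p] f
      = ∑ i, (if i = 0 then X i else X i - X i ^ 2) * pderiv i f := by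
  have hfun : (fun g : MvPolynomial (Fin (m + 2)) k =>
      ∑ i, (if i = 0 then X i else X i - X i ^ 2) * pderiv i g) = ⇑(Statement16Aux.D k m) := by
    funext g
    rw [Statement16Aux.D_apply]
  rw [hfun, Statement16Aux.D_char p m, ← Statement16Aux.D_apply]
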